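/- Let (x, p) be a solution to the Eisenberg–Gale program with budgets e, and let K be a nonempty set of agents whose bundles are all identical (x_{ia} = x_{i'a} for all i, i' ∈ K and all a ∈ G); write X_K for this common bundle. Then: (i) for every item γ ∈ G with positive fraction in X_K, the item obtained from γ by replacing its coordinate in position i with h_i for every i ∈ K also has positive fraction in X_K; and consequently (ii) some item of G_H has positive fraction in X_K. -/

import Mathlib

open Finset

/-- The item types: one item for every combination of agent values,
`G = S_1 × ⋯ × S_n`. -/
abbrev ItemSpace (n : ℕ) (S : Fin n → Finset ℝ) := (i : Fin n) → {x : ℝ // x ∈ S i}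

/-- Agent `i`'s scaled value for item `g = (a_1, …, a_n)`: `v'_i(g) = g_i·f(g)`. -/
def itemVal {n : ℕ} {S : Fin n → Finset ℝ} (f : ItemSpace n S → ℝ)
    (i : Fin n) (g : ItemSpace n S) : ℝ :=
  (g i).1 * f g

/-- `x` is a fractional allocation of the items `G` to the `n` agents. -/
def IsAllocG {n : ℕ} {S : Fin n → Finset ℝ} (x : Fin n → ItemSpace n S → ℝ) : Prop :=
  (∀ i g, x i g ∈ Set.Icc (0 : ℝ) 1) ∧ ∀ g, ∑ i, x i g = 1

/-- Agent `i`'s utility for the fractional bundle `y`. -/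
def bundleValG {n : ℕ} {S : Fin n → Finset ℝ} (f : ItemSpace n S → ℝ)
    (i : Fin n) (y : ItemSpace n S → ℝ) : ℝ :=
  ∑ g, itemVal f i g * y g

/-- `(x, p)` is a solution to the Eisenberg–Gale program with budgets `e`:
`e` and `p` are positive, `x` is a fractional allocation giving every agent positive
utility, and the KKT conditions hold. -/
def EGSolutionG {n : ℕ} {S : Fin n → Finset ℝ} (f : ItemSpace n S → ℝ)
    (e : Fin n → ℝ) (p : ItemSpace n S → ℝ) (x : Fin n → ItemSpace n S → ℝ) : Prop :=
  (∀ i, 0 < e i) ∧ (∀ g, 0 < p g) ∧ IsAllocG x ∧ (∀ i, 0 < bundleValG f i (x i)) ∧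
  (∀ g, ∑ i, x i g = 1) ∧
  (∀ i g, itemVal f i g / p g ≤ bundleValG f i (x i) / e i) ∧
  (∀ i g, 0 < x i g → itemVal f i g / p g = bundleValG f i (x i) / e i)

/-- Let `(x, p)` solve the Eisenberg–Gale program, and let `K` be a nonempty set of
agents with identical bundles.  Then (i) for every item `γ` with positive fraction in
the common bundle, the item obtained from `γ` by raising every coordinate in `K` to the
corresponding maximum value `h_i = max S_i` also has positive fraction in the common
bundle; and consequently (ii) some item of `G_H` (an item whose coordinates in `K` are
all the maxima `h_i`) has positive fraction in the common bundle. -/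
theorem EG_clique_high_value_item
    (n : ℕ) (S : Fin n → Finset ℝ)
    (hS01 : ∀ i, ∀ x ∈ S i, x ∈ Set.Icc (0 : ℝ) 1)
    (hScard : ∀ i, 2 ≤ (S i).card)
    (hne : ∀ i, (S i).Nonempty)
    (f : ItemSpace n S → ℝ) (hf0 : ∀ g, 0 < f g) (hf1 : ∀ g, f g ≤ 1)
    (hfsum : ∑ g, f g = 1)
    (e : Fin n → ℝ) (p : ItemSpace n S → ℝ) (x : Fin n → ItemSpace n S → ℝ)
    (hEG : EGSolutionG f e p x)
    (K : Finset (Fin n)) (hK : K.Nonempty)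
    (hsame : ∀ i ∈ K, ∀ i' ∈ K, ∀ g, x i g = x i' g) :
    (∀ γ : ItemSpace n S, (∃ i ∈ K, 0 < x i γ) →
      ∃ i ∈ K, 0 < x i (fun i' => if i' ∈ K then
          ⟨(S i').max' (hne i'), (S i').max'_mem (hne i')⟩ else γ i')) ∧
    (∃ γ : ItemSpace n S,
      (∀ i ∈ K, (γ i).1 = (S i).max' (hne i)) ∧ ∃ i ∈ K, 0 < x i γ) := by
  obtain ⟨he, hp, ⟨hx01, hxsum⟩, hV, hsum1, hkkt1, hkkt2⟩ := hEG
  have main : ∀ γ : ItemSpace n S, (∃ i ∈ K, 0 < x i γ) →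
      ∃ i ∈ K, 0 < x i (fun i' => if i' ∈ K then
          ⟨(S i').max' (hne i'), (S i').max'_mem (hne i')⟩ else γ i') := by
    intro γ hγ
    obtain ⟨i0, hi0K, hi0pos⟩ := hγ
    set γ' : ItemSpace n S := (fun i' => if i' ∈ K then
          ⟨(S i').max' (hne i'), (S i').max'_mem (hne i')⟩ else γ i') with hγ'def
    by_cases hall : ∀ i ∈ K, (γ i).1 = (S i).max' (hne i)
    · refine ⟨i0, hi0K, ?_⟩
      have hEq : γ' = γ := by
        funext i'
        rw [hγ'def]
        by_cases h : i' ∈ K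
        · simp only [if_pos h]
          exact Subtype.ext (hall i' h).symm
        · simp only [if_neg h]
      rw [hEq]; exact hi0pos
    · push_neg at hall
      obtain ⟨i, hiK, hnei⟩ := hall
      have hle : (γ i).1 ≤ (S i).max' (hne i) := (S i).le_max' _ (γ i).2
      have hlt : (γ i).1 < (S i).max' (hne i) := lt_of_le_of_ne hle hnei
      have hxiγ : 0 < x i γ := by rw [← hsame i0 hi0K i hiK γ]; exact hi0pos
      obtain ⟨j, hj⟩ : ∃ j, 0 < x j γ' := by
        by_contra h
        push_neg at h
        have h0 : ∑ j, x j γ' ≤ 0 := Finset.sum_nonpos (fun j _ => h j)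
        linarith [hsum1 γ']
      by_cases hjK : j ∈ K
      · exact ⟨j, hjK, hj⟩
      exfalso
      have hγ'j : γ' j = γ j := by rw [hγ'def]; simp only [if_neg hjK]
      have hγ'i : (γ' i).1 = (S i).max' (hne i) := by rw [hγ'def]; simp only [if_pos hiK]
      set A := f γ' with hA'
      set B := f γ with hB'
      have hA : 0 < A := hf0 γ'
      have hB : 0 < B := hf0 γ
      set Vi := bundleValG f i (x i) with hVi'
      set Vj := bundleValG f j (x j) with hVj'
      have hVi : 0 < Vi := hV i
      have hVj : 0 < Vj := hV j
      set hi := (S i).max' (hne i) with hhi'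
      set gi := (γ i).1 with hgi'
      set gj := (γ j).1 with hgj'
      -- (1): hi * A * e i ≤ p γ' * Vi
      have h1 : hi * A * e i ≤ p γ' * Vi := by
        have h := hkkt1 i γ'
        rw [itemVal, hγ'i, div_le_div_iff₀ (hp γ') (he i)] at h
        linarith
      -- (2): gj * A * e j = p γ' * Vj
      have h2 : gj * A * e j = p γ' * Vj := by
        have h := hkkt2 j γ' hj
        rw [itemVal, hγ'j, div_eq_div_iff (hp γ').ne' (he j).ne'] at h
        linarith
      -- (3): gj * B * e j ≤ p γ * Vj
      have h3 : gj * B * e j ≤ p γ * Vj := by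
        have h := hkkt1 j γ
        rw [itemVal, div_le_div_iff₀ (hp γ) (he j)] at h
        linarith
      -- (4): gi * B * e i = p γ * Vi
      have h4 : gi * B * e i = p γ * Vi := by
        have h := hkkt2 i γ hxiγ
        rw [itemVal, div_eq_div_iff (hp γ).ne' (he i).ne'] at h
        linarith
      have t2 : p γ' * Vi * Vj = gj * A * e j * Vi := by linear_combination -Vi * h2
      have t3 : hi * A * e i * Vj ≤ gj * A * e j * Vi := by
        have := mul_le_mul_of_nonneg_right h1 hVj.le
        linarith
      have t3' : hi * e i * Vj ≤ gj * e j * Vi := by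
        have hh : hi * e i * Vj * A ≤ gj * e j * Vi * A := by linarith [t3]
        exact (mul_le_mul_iff_of_pos_right hA).mp hh
      have u2 : p γ * Vj * Vi = gi * B * e i * Vj := by linear_combination -Vj * h4
      have u3 : gj * B * e j * Vi ≤ gi * B * e i * Vj := by
        have := mul_le_mul_of_nonneg_right h3 hVi.le
        linarith
      have u3' : gj * e j * Vi ≤ gi * e i * Vj := by
        have hh : gj * e j * Vi * B ≤ gi * e i * Vj * B := by linarith [u3]
        exact (mul_le_mul_iff_of_pos_right hB).mp hh
      have hfin := mul_lt_mul_of_pos_right hlt (mul_pos (he i) hVj)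
      nlinarith [t3', u3', hfin]
  refine ⟨main, ?_⟩
  obtain ⟨i0, hi0K⟩ := hK
  obtain ⟨γ, hγpos⟩ : ∃ γ, 0 < x i0 γ := by
    by_contra h
    push_neg at h
    have h0 : bundleValG f i0 (x i0) = 0 := by
      rw [bundleValG]
      apply Finset.sum_eq_zero
      intro g _
      have hx0 : x i0 g = 0 := le_antisymm (h g) (hx01 i0 g).1
      rw [hx0, mul_zero]
    linarith [hV i0]
  obtain ⟨i, hiK, hpos⟩ := main γ ⟨i0, hi0K, hγpos⟩
  refine ⟨_, ?_, ⟨i, hiK, hpos⟩⟩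
  intro i' hi'K
  simp only [if_pos hi'K]
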